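/- (Khintchine transfer) Let n ≥ 1 and τ ≥ 0. Then Ω^n(τ) ⊆ Ω_n(nτ): if ω ∈ ℝⁿ satisfies ‖⟨k,ω⟩‖_ℤ ≥ C·|k|^{-(1+τ)n} for all nonzero k ∈ ℤⁿ (for some C > 0), then there exists C' > 0 such that ‖Tω‖_ℤ ≥ C'·T^{-(1+nτ)/n} for every positive integer T. -/

import Mathlib

open Finset

/-- Sup norm on `ℝⁿ`. -/
noncomputable def supNorm {n : ℕ} (x : Fin n → ℝ) : ℝ := ⨆ i, |x i|

/-- Sup-norm distance from `x ∈ ℝⁿ` to the lattice `ℤⁿ`. -/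
noncomputable def distZ {n : ℕ} (x : Fin n → ℝ) : ℝ :=
  sInf {r : ℝ | ∃ k : Fin n → ℤ, r = supNorm (fun i => x i - k i)}

/-- Distance from a real number to `ℤ`. -/
noncomputable def distZ1 (t : ℝ) : ℝ := sInf {r : ℝ | ∃ m : ℤ, r = |t - m|}

/-- `ω ∈ ℚⁿ`. -/
def IsRationalVec {n : ℕ} (ω : Fin n → ℝ) : Prop := ∀ i, ∃ q : ℚ, (q : ℝ) = ω i

/-- `ω` is resonant: some nonzero integer vector `k` has `⟨k, ω⟩ ∈ ℤ`. -/
def Resonant {n : ℕ} (ω : Fin n → ℝ) : Prop :=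
  ∃ k : Fin n → ℤ, k ≠ 0 ∧ ∃ m : ℤ, ∑ i, (k i : ℝ) * ω i = (m : ℝ)

/-- The sequence of periods of `ω`. -/
noncomputable def periods {n : ℕ} (ω : Fin n → ℝ) : ℕ → ℕ
  | 0 => 1
  | i + 1 => sInf {T : ℕ | 1 ≤ T ∧
      distZ (fun j => (T : ℝ) * ω j) < distZ (fun j => (periods ω i : ℝ) * ω j)}

/-- The resonance module of `ω`, as a subgroup of `ℤⁿ`. -/
def resModule {n : ℕ} (ω : Fin n → ℝ) : AddSubgroup (Fin n → ℤ) where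
  carrier := {k | ∃ m : ℤ, ∑ i, (k i : ℝ) * ω i = (m : ℝ)}
  zero_mem' := ⟨0, by simp⟩
  add_mem' := by
    rintro a b ⟨ma, ha⟩ ⟨mb, hb⟩
    refine ⟨ma + mb, ?_⟩
    push_cast
    simp only [Pi.add_apply, Int.cast_add, add_mul, Finset.sum_add_distrib, ha, hb]
  neg_mem' := by
    rintro a ⟨m, hm⟩
    refine ⟨-m, ?_⟩
    push_cast
    simp [neg_mul, Finset.sum_neg_distrib, hm]

lemma abs_le_supNorm {n : ℕ} (x : Fin n → ℝ) (i : Fin n) : |x i| ≤ supNorm x := by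
  unfold supNorm
  exact le_ciSup (f := fun j => |x j|) (Set.Finite.bddAbove (Set.finite_range _)) i

lemma supNorm_le {n : ℕ} (hn : 1 ≤ n) (x : Fin n → ℝ) {B : ℝ}
    (h : ∀ i, |x i| ≤ B) : supNorm x ≤ B := by
  have : Nonempty (Fin n) := ⟨⟨0, hn⟩⟩
  exact ciSup_le h

lemma round_best (t : ℝ) (m : ℤ) : |t - round t| ≤ |t - m| := by
  by_cases hm : m = round t
  · subst hm; exact le_rfl
  · have h1 : |t - round t| ≤ 1 / 2 := abs_sub_round t
    have hne : round t - m ≠ 0 := sub_ne_zero.2 fun h => hm h.symm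
    have h2 : (1 : ℝ) ≤ |(round t : ℝ) - m| := by
      have := Int.one_le_abs hne
      calc (1:ℝ) ≤ |((round t - m : ℤ) : ℝ)| := by exact_mod_cast this
        _ = |(round t : ℝ) - m| := by push_cast; ring_nf
    have h4 : |(round t:ℝ) - m| - |(round t:ℝ) - t| ≤ |t - m| := by
      have := abs_sub_abs_le_abs_sub ((round t : ℝ) - m) ((round t : ℝ) - t)
      have heq : ((round t:ℝ) - m) - ((round t:ℝ) - t) = t - m := by ring
      rwa [heq] at this
    have h5 : |(round t : ℝ) - t| = |t - round t| := abs_sub_comm _ _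
    linarith

lemma distZ1_le (t : ℝ) (m : ℤ) : distZ1 t ≤ |t - m| := by
  apply csInf_le
  · exact ⟨0, by rintro r ⟨k, rfl⟩; exact abs_nonneg _⟩
  · exact ⟨m, rfl⟩

lemma distZ_ge {n : ℕ} (x : Fin n → ℝ) (i : Fin n) :
    |x i - round (x i)| ≤ distZ x := by
  have hne : {r : ℝ | ∃ k : Fin n → ℤ, r = supNorm (fun i => x i - k i)}.Nonempty :=
    ⟨supNorm (fun i => x i - (0 : Fin n → ℤ) i), ⟨0, rfl⟩⟩
  apply le_csInf hne
  rintro r ⟨k, rfl⟩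
  calc |x i - round (x i)| ≤ |x i - k i| := round_best _ _
    _ ≤ _ := abs_le_supNorm (fun j => x j - k j) i

lemma pigeon {n : ℕ} (p : Fin n → ℤ) (T M : ℕ) (hT : 1 ≤ T)
    (hcard : T < (M+1)^n) :
    ∃ k : Fin n → ℤ, k ≠ 0 ∧ (∀ i, |k i| ≤ (M:ℤ)) ∧ (T:ℤ) ∣ ∑ i, k i * p i := by
  haveI : NeZero T := ⟨by omega⟩
  have hlt : Fintype.card (ZMod T) < Fintype.card (Fin n → Fin (M+1)) := by
    simpa [ZMod.card] using hcard
  obtain ⟨a, b, hab, hfab⟩ := Fintype.exists_ne_map_eq_of_card_lt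
    (fun a : Fin n → Fin (M+1) => ((∑ i, (a i : ℤ) * p i : ℤ) : ZMod T)) hlt
  refine ⟨fun i => (a i : ℤ) - (b i : ℤ), ?_, ?_, ?_⟩
  · intro h
    apply hab
    funext i
    have h1 := congrFun h i
    simp only [Pi.zero_apply, sub_eq_zero] at h1
    exact Fin.ext (by exact_mod_cast h1)
  · intro i
    have ha : (a i : ℤ) ≤ M := by exact_mod_cast Nat.lt_succ_iff.1 (a i).is_lt
    have hb : (b i : ℤ) ≤ M := by exact_mod_cast Nat.lt_succ_iff.1 (b i).is_lt
    have ha0 : (0:ℤ) ≤ (a i : ℤ) := Int.ofNat_nonneg _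
    have hb0 : (0:ℤ) ≤ (b i : ℤ) := Int.ofNat_nonneg _
    show |(a i : ℤ) - (b i : ℤ)| ≤ (M:ℤ)
    rw [abs_le]
    omega
  · show (T:ℤ) ∣ ∑ i, ((a i : ℤ) - (b i : ℤ)) * p i
    rw [← ZMod.intCast_zmod_eq_zero_iff_dvd]
    push_cast
    push_cast at hfab
    simp only [sub_mul, Finset.sum_sub_distrib, hfab, sub_self]

/-- Khintchine: `Ω^n(τ) ⊆ Ω_n(nτ)`. -/
theorem stmt5 {n : ℕ} (hn : 1 ≤ n) (τ : ℝ) (hτ : 0 ≤ τ) (ω : Fin n → ℝ)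
    (C : ℝ) (hC : 0 < C)
    (hlin : ∀ k : Fin n → ℤ, k ≠ 0 →
      distZ1 (∑ i, (k i : ℝ) * ω i) ≥
        C * (supNorm fun i => (k i : ℝ)) ^ (-(1 + τ) * (n : ℝ))) :
    ∃ C' > (0 : ℝ), ∀ T : ℕ, 1 ≤ T →
      distZ (fun j => (T : ℝ) * ω j) ≥
        C' * (T : ℝ) ^ (-(1 + (n : ℝ) * τ) / (n : ℝ)) := by
  have hn0 : (0:ℝ) < n := by exact_mod_cast hn
  have hnne : (n:ℝ) ≠ 0 := ne_of_gt hn0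
  refine ⟨C / n, by positivity, ?_⟩
  intro T hT
  have hT1 : (1:ℝ) ≤ (T:ℝ) := by exact_mod_cast hT
  have hT0 : (0:ℝ) < (T:ℝ) := by linarith
  set ε := distZ (fun j => (T:ℝ) * ω j) with hεdef
  have hε0 : 0 ≤ ε :=
    le_trans (abs_nonneg _) (distZ_ge (fun j => (T:ℝ) * ω j) ⟨0, hn⟩)
  set M : ℕ := ⌊(T:ℝ) ^ ((n:ℝ)⁻¹)⌋₊ with hMdef
  set A : ℝ := (T:ℝ) ^ ((n:ℝ)⁻¹) with hAdef
  have hA0 : (0:ℝ) < A := Real.rpow_pos_of_pos hT0 _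
  have hA1 : (1:ℝ) ≤ A := Real.one_le_rpow hT1 (by positivity)
  have hMle : (M:ℝ) ≤ A := Nat.floor_le hA0.le
  have hcard : T < (M+1)^n := by
    have h1 : A < (M:ℝ) + 1 := Nat.lt_floor_add_one A
    have h2 : (T:ℝ) < ((M:ℝ)+1)^n := by
      calc (T:ℝ) = A ^ n := (Real.rpow_inv_natCast_pow hT0.le (by omega)).symm
        _ < ((M:ℝ)+1)^n := by
          apply pow_lt_pow_left₀ h1 hA0.le (by omega)
    have h3 : (T:ℝ) < (((M+1)^n : ℕ) : ℝ) := by push_cast; exact h2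
    exact_mod_cast h3
  set p : Fin n → ℤ := fun i => round ((T:ℝ) * ω i) with hpdef
  obtain ⟨k, hk0, hkM, hdvd⟩ := pigeon p T M hT hcard
  obtain ⟨m, hm⟩ := hdvd
  have hεi : ∀ i, |(T:ℝ) * ω i - (p i : ℝ)| ≤ ε := fun i =>
    distZ_ge (fun j => (T:ℝ) * ω j) i
  set S : ℝ := supNorm (fun i => (k i : ℝ)) with hSdef
  have hS1 : (1:ℝ) ≤ S := by
    obtain ⟨i, hi⟩ : ∃ i, k i ≠ 0 := by
      by_contra h; push_neg at h; exact hk0 (funext h)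
    calc (1:ℝ) ≤ |((k i : ℤ) : ℝ)| := by exact_mod_cast Int.one_le_abs hi
      _ ≤ S := abs_le_supNorm (fun j => (k j : ℝ)) i
  have hSM : S ≤ (M:ℝ) := supNorm_le hn _ (fun i => by exact_mod_cast hkM i)
  have hlow := hlin k hk0
  -- upper bound for distZ1
  have key : distZ1 (∑ i, (k i : ℝ) * ω i) ≤ (n:ℝ) * M * ε / T := by
    have hm' : (∑ i, (k i : ℝ) * (p i : ℝ)) = (T:ℝ) * (m:ℝ) := by
      exact_mod_cast congrArg (fun z : ℤ => (z:ℝ)) hm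
    have h2 : (T:ℝ) * (∑ i, (k i:ℝ) * ω i - (m:ℝ)) =
        ∑ i, (k i:ℝ) * ((T:ℝ) * ω i - (p i : ℝ)) := by
      rw [mul_sub, Finset.mul_sum, ← hm', ← Finset.sum_sub_distrib]
      apply Finset.sum_congr rfl
      intro i _
      ring
    have h1 : distZ1 (∑ i, (k i:ℝ) * ω i) ≤ |∑ i, (k i:ℝ) * ω i - (m:ℝ)| :=
      distZ1_le _ m
    have h3 : |∑ i, (k i:ℝ) * ω i - (m:ℝ)| ≤ (n:ℝ) * M * ε / T := by
      rw [le_div_iff₀ hT0]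
      have h4 : |∑ i, (k i:ℝ) * ω i - (m:ℝ)| * T =
          |(T:ℝ) * (∑ i, (k i:ℝ) * ω i - (m:ℝ))| := by
        rw [abs_mul, abs_of_pos hT0]; ring
      rw [h4, h2]
      calc |∑ i, (k i:ℝ) * ((T:ℝ) * ω i - (p i : ℝ))|
          ≤ ∑ i, |(k i:ℝ) * ((T:ℝ) * ω i - (p i : ℝ))| :=
            Finset.abs_sum_le_sum_abs _ _
        _ ≤ ∑ _i : Fin n, (M:ℝ) * ε := Finset.sum_le_sum (fun i _ => by
            rw [abs_mul]
            apply mul_le_mul ?_ (hεi i) (abs_nonneg _) (Nat.cast_nonneg M)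
            calc |(k i : ℝ)| = |((k i : ℤ) : ℝ)| := rfl
              _ ≤ (M:ℝ) := by exact_mod_cast hkM i)
        _ = (n:ℝ) * M * ε := by
            rw [Finset.sum_const, Finset.card_univ, Fintype.card_fin]
            push_cast; ring
    exact le_trans h1 h3
  -- lower bound chain
  have hee : -(1+τ) * (n:ℝ) ≤ 0 := by nlinarith
  have hstep1 : (T:ℝ) ^ (-(1+τ)) ≤ S ^ (-(1+τ) * (n:ℝ)) := by
    have h1 : A ^ (-(1+τ) * (n:ℝ)) ≤ S ^ (-(1+τ) * (n:ℝ)) :=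
      Real.rpow_le_rpow_of_nonpos (by linarith) (hSM.trans hMle) hee
    have h2 : (T:ℝ) ^ (-(1+τ)) = A ^ (-(1+τ) * (n:ℝ)) := by
      rw [hAdef, ← Real.rpow_mul hT0.le]
      congr 1
      field_simp
    rw [h2]; exact h1
  have hchain : C * (T:ℝ) ^ (-(1+τ)) ≤ (n:ℝ) * M * ε / T :=
    le_trans (mul_le_mul_of_nonneg_left hstep1 hC.le) (le_trans hlow key)
  have hfin : C * (T:ℝ) ^ (-(1+τ)) * T ≤ (n:ℝ) * A * ε := by
    have h1 := (le_div_iff₀ hT0).1 hchain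
    have h2 : (n:ℝ) * M * ε ≤ (n:ℝ) * A * ε :=
      mul_le_mul_of_nonneg_right (mul_le_mul_of_nonneg_left hMle hn0.le) hε0
    linarith
  set B : ℝ := (T:ℝ) ^ (-(1 + (n:ℝ) * τ) / (n:ℝ)) with hBdef
  have hB0 : 0 < B := Real.rpow_pos_of_pos hT0 _
  have hid : C * (T:ℝ) ^ (-(1+τ)) * T = (C / (n:ℝ) * B) * ((n:ℝ) * A) := by
    have key2 : (T:ℝ) ^ (-(1+τ)) * (T:ℝ) = B * A := by
      have e1 : (T:ℝ) ^ (-(1+τ)) * (T:ℝ) = (T:ℝ) ^ (-(1+τ) + 1) := by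
        rw [Real.rpow_add hT0, Real.rpow_one]
      have e2 : B * A = (T:ℝ) ^ (-(1 + (n:ℝ) * τ) / (n:ℝ) + (n:ℝ)⁻¹) :=
        (Real.rpow_add hT0 _ _).symm
      rw [e1, e2]
      congr 1
      field_simp
      ring
    calc C * (T:ℝ) ^ (-(1+τ)) * T = C * ((T:ℝ) ^ (-(1+τ)) * T) := by ring
      _ = C * (B * A) := by rw [key2]
      _ = (C / (n:ℝ) * B) * ((n:ℝ) * A) := by field_simp
  rw [hid] at hfin
  rw [ge_iff_le]
  have hfin2 : (C / (n:ℝ) * B) * ((n:ℝ) * A) ≤ ε * ((n:ℝ) * A) := by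
    calc (C / (n:ℝ) * B) * ((n:ℝ) * A) ≤ (n:ℝ) * A * ε := hfin
      _ = ε * ((n:ℝ) * A) := by ring
  exact le_of_mul_le_mul_right hfin2 (by positivity)
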